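/- Let G be a connected simple graph with vertex set {1,...,n} that is not bipartite. Then the set of G-indecomposable points in ℝP_+^{n-1} consists exactly of the points [Σ_{i∈I} f_i − Σ_{j∈J} f_j], where I, J ⊆ {1,...,n} are disjoint sets such that the subgraph of G with vertex set I ∪ J and edge set {ij ∈ E(G) : i ∈ I, j ∈ J} is connected, and no connected component of the induced subgraph G − (I ∪ J) is bipartite. -/

import Mathlib

open scoped Classical

noncomputable section

/-- The standard inner product on `ℝ^n`. -/
def dotR {n : ℕ} (u v : Fin n → ℝ) : ℝ := ∑ i, u i * v i

/-- `[u] = [u']` : positive equivalence of nonzero vectors (`u' = r • u` with `r > 0`). -/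
def PosEq {n : ℕ} (u u' : Fin n → ℝ) : Prop := ∃ r : ℝ, 0 < r ∧ u' = r • u

/-- `u` is decomposable with respect to the set of vectors `S`. -/
def Decomp {n : ℕ} (S : Set (Fin n → ℝ)) (u : Fin n → ℝ) : Prop :=
  ∃ u' u'' : Fin n → ℝ, u' ≠ 0 ∧ u'' ≠ 0 ∧
    u' ∈ Submodule.span ℝ S ∧ u'' ∈ Submodule.span ℝ S ∧
    u = u' + u'' ∧ ¬ PosEq u u' ∧ ¬ PosEq u u'' ∧
    ∀ x ∈ S, 0 ≤ dotR u' x * dotR u'' x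

/-- `u` is indecomposable with respect to the set of vectors `S`. -/
def Indecomp {n : ℕ} (S : Set (Fin n → ℝ)) (u : Fin n → ℝ) : Prop :=
  u ≠ 0 ∧ u ∈ Submodule.span ℝ S ∧ ¬ Decomp S u

/-- The column `v(e) = f_i + f_j` of the incidence matrix corresponding to an edge
`e = ij`. -/
def edgeVec {n : ℕ} (e : Sym2 (Fin n)) : Fin n → ℝ := fun k => if k ∈ e then 1 else 0

/-- The set of columns of the incidence matrix of `G`. -/
def edgeVecs {n : ℕ} (G : SimpleGraph (Fin n)) : Set (Fin n → ℝ) := edgeVec '' G.edgeSet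

/-- A graph is bipartite if its vertices split into two parts such that every edge
joins the two parts. -/
def IsBipartiteG {V : Type*} (G : SimpleGraph V) : Prop :=
  ∃ S : Set V, ∀ a b, G.Adj a b → (a ∈ S ↔ b ∉ S)

/-- The subgraph of `G` with vertex set `I ∪ J` and edge set
`{ij ∈ E(G) : i ∈ I, j ∈ J}`. -/
def crossSubgraph {n : ℕ} (G : SimpleGraph (Fin n)) (I J : Finset (Fin n)) :
    SimpleGraph ((I : Set (Fin n)) ∪ (J : Set (Fin n)) : Set (Fin n)) :=
  (SimpleGraph.fromRel fun x y => G.Adj x y ∧ x ∈ I ∧ y ∈ J).induce _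

/-! ### Auxiliary material -/

section Aux

variable {n : ℕ}

lemma edgeVec_eq {i j : Fin n} (h : i ≠ j) :
    edgeVec (s(i,j)) = fun k => (if k = i then (1:ℝ) else 0) + (if k = j then 1 else 0) := by
  funext k
  simp only [edgeVec, Sym2.mem_iff]
  by_cases hi : k = i <;> by_cases hj : k = j <;> simp_all

lemma dot_edgeVec (w : Fin n → ℝ) {i j : Fin n} (h : i ≠ j) :
    dotR w (edgeVec s(i,j)) = w i + w j := by
  rw [edgeVec_eq h, dotR]
  have h1 : ∀ k, w k * ((if k = i then (1:ℝ) else 0) + (if k = j then 1 else 0))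
      = (if k = i then w i else 0) + (if k = j then w j else 0) := by
    intro k; split_ifs with h1 h2 h2 <;> subst_vars <;> simp_all
  simp_rw [h1]
  rw [Finset.sum_add_distrib, Finset.sum_ite_eq', Finset.sum_ite_eq']
  simp

/-- Propagation of a property along walks. -/
lemma walk_prop {V : Type*} {G' : SimpleGraph V} (P : V → Prop)
    (hstep : ∀ a b, G'.Adj a b → P a → P b) {a b : V} (h : G'.Reachable a b) (ha : P a) :
    P b := by
  obtain ⟨p⟩ := h
  induction p with
  | nil => exact ha
  | cons h' p' ih => exact ih (hstep _ _ h' ha)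

/-- Sign propagation along walks for a vector satisfying `z i + z j = 0` on edges. -/
lemma walk_sign {V : Type*} {G' : SimpleGraph V} {z : V → ℝ}
    (hedge : ∀ i j, G'.Adj i j → z i + z j = 0) {a b : V} (h : G'.Reachable a b) :
    z b = z a ∨ z b = - z a := by
  obtain ⟨p⟩ := h
  induction p with
  | nil => left; rfl
  | cons h' p' ih =>
    have h2 := hedge _ _ h'
    rcases ih with h1 | h1
    · right; rw [h1]; linarith
    · left; rw [h1]; linarith

/-- The span of the incidence columns of a connected non-bipartite graph is everything. -/
lemma span_edgeVecs_top (G : SimpleGraph (Fin n)) (hconn : G.Connected)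
    (hnb : ¬ IsBipartiteG G) : Submodule.span ℝ (edgeVecs G) = ⊤ := by
  by_contra hne
  obtain ⟨f, hf0, hfmap⟩ := Submodule.exists_dual_map_eq_bot_of_lt_top
    (p := Submodule.span ℝ (edgeVecs G)) (lt_top_iff_ne_top.2 hne) inferInstance
  set z : Fin n → ℝ := fun i => f (Pi.single i 1) with hz
  have hsingle : ∀ x : Fin n → ℝ, f x = dotR z x := by
    intro x
    have hx2 : x = ∑ i, x i • (Pi.single i 1 : Fin n → ℝ) := by
      funext k; simp [Pi.single_apply]
    conv_lhs => rw [hx2]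
    simp only [map_sum, map_smul, smul_eq_mul, dotR]
    exact Finset.sum_congr rfl fun i _ => mul_comm _ _
  have hzero : ∀ x ∈ Submodule.span ℝ (edgeVecs G), dotR z x = 0 := by
    intro x hx
    rw [← hsingle]
    have h2 : f x ∈ Submodule.map f (Submodule.span ℝ (edgeVecs G)) :=
      Submodule.mem_map_of_mem hx
    rw [hfmap] at h2
    simpa using h2
  have hedge : ∀ i j, G.Adj i j → z i + z j = 0 := by
    intro i j hij
    have h0 := hzero (edgeVec s(i,j)) (Submodule.subset_span ⟨s(i,j), hij, rfl⟩)
    rwa [dot_edgeVec z hij.ne] at h0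
  have hz0 : z ≠ 0 := by
    intro h
    apply hf0
    apply LinearMap.ext
    intro x
    rw [hsingle, h]
    simp [dotR]
  obtain ⟨i0, hi0⟩ : ∃ i0, z i0 ≠ 0 := by
    by_contra h; push_neg at h; exact hz0 (funext h)
  apply hnb
  refine ⟨{i | z i = z i0}, ?_⟩
  intro a b hab
  have hza : z a = z i0 ∨ z a = - z i0 := by
    rcases walk_sign hedge (hconn.preconnected i0 a) with h | h
    · left; exact h
    · right; exact h
  have hzab := hedge a b hab
  simp only [Set.mem_setOf_eq]
  constructor
  · intro h1 h2
    rw [h1, h2] at hzab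
    exact hi0 (by linarith)
  · intro h2
    rcases hza with h | h
    · exact h
    · exfalso; exact h2 (by linarith)

/-- The system of "zero-sum" edge constraints of `u`. -/
def SolP (G : SimpleGraph (Fin n)) (u w : Fin n → ℝ) : Prop :=
  ∀ i j : Fin n, G.Adj i j → u i + u j = 0 → w i + w j = 0

/-- The key criterion: `u ≠ 0` and every solution of the zero-sum constraints of `u`
is a multiple of `u`. -/
def Crit (G : SimpleGraph (Fin n)) (u : Fin n → ℝ) : Prop :=
  u ≠ 0 ∧ ∀ w : Fin n → ℝ, SolP G u w → ∃ c : ℝ, w = c • u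

lemma crit_smul {G : SimpleGraph (Fin n)} {u : Fin n → ℝ} {r : ℝ} (hr : 0 < r)
    (h : Crit G u) : Crit G (r • u) := by
  obtain ⟨h0, hc⟩ := h
  refine ⟨smul_ne_zero (ne_of_gt hr) h0, ?_⟩
  intro w hw
  have hw' : SolP G u w := by
    intro i j ha hs
    apply hw i j ha
    simp only [Pi.smul_apply, smul_eq_mul]
    calc r * u i + r * u j = r * (u i + u j) := by ring
      _ = 0 := by rw [hs, mul_zero]
  obtain ⟨c, hc'⟩ := hc w hw'
  refine ⟨c / r, ?_⟩
  rw [smul_smul, div_mul_cancel₀ c (ne_of_gt hr)]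
  exact hc'

/-- The "zero-sum" graph of `u` inside `G`. -/
def zg (G : SimpleGraph (Fin n)) (u : Fin n → ℝ) : SimpleGraph (Fin n) where
  Adj i j := G.Adj i j ∧ u i + u j = 0
  symm := by
    refine ⟨fun i j h => ?_⟩
    exact ⟨h.1.symm, by linarith [h.2]⟩
  loopless := by
    refine ⟨fun i h => ?_⟩
    exact G.loopless.irrefl i h.1

/-- Indecomposability is equivalent to the criterion. -/
lemma indecomp_iff_crit (G : SimpleGraph (Fin n)) (hconn : G.Connected)
    (hnb : ¬ IsBipartiteG G) (u : Fin n → ℝ) :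
    Indecomp (edgeVecs G) u ↔ Crit G u := by
  have hspan := span_edgeVecs_top G hconn hnb
  constructor
  · rintro ⟨hu0, -, hnd⟩
    refine ⟨hu0, ?_⟩
    intro w hw
    by_contra hno
    push_neg at hno
    apply hnd
    set F : Finset (Fin n × Fin n) :=
      Finset.univ.filter (fun p => G.Adj p.1 p.2 ∧ u p.1 + u p.2 ≠ 0) with hF
    set g : Fin n × Fin n → ℝ :=
      fun p => |u p.1 + u p.2| / (2 * (|w p.1 + w p.2| + 1)) with hg
    set t : ℝ := if hFne : (F.image g).Nonempty then (F.image g).min' hFne else 1 with ht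
    have ht0 : 0 < t := by
      rw [ht]; split_ifs with hFne
      · obtain ⟨p, hp, hpe⟩ := Finset.mem_image.mp ((F.image g).min'_mem hFne)
        rw [← hpe, hg]
        have hp' := (Finset.mem_filter.mp hp).2
        have h1 : 0 < |u p.1 + u p.2| := abs_pos.mpr hp'.2
        positivity
      · norm_num
    have htle : ∀ i j : Fin n, G.Adj i j → u i + u j ≠ 0 →
        t * |w i + w j| ≤ |u i + u j| / 2 := by
      intro i j ha hs
      have hmem : (i,j) ∈ F := Finset.mem_filter.mpr ⟨Finset.mem_univ _, ha, hs⟩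
      have h1 : t ≤ g (i,j) := by
        rw [ht]
        have hne2 : (F.image g).Nonempty := ⟨g (i,j), Finset.mem_image_of_mem g hmem⟩
        rw [dif_pos hne2]
        exact Finset.min'_le _ _ (Finset.mem_image_of_mem g hmem)
      have hd0 : (0:ℝ) ≤ |w i + w j| := abs_nonneg _
      calc t * |w i + w j| ≤ g (i,j) * |w i + w j| :=
            mul_le_mul_of_nonneg_right h1 hd0
        _ = |u i + u j| * |w i + w j| / (2 * (|w i + w j| + 1)) := by rw [hg]; ring
        _ ≤ |u i + u j| / 2 := by
            rw [div_le_div_iff₀ (by positivity) (by norm_num)]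
            nlinarith [abs_nonneg (u i + u j)]
    refine ⟨fun k => u k / 2 + t * w k, fun k => u k / 2 - t * w k, ?_, ?_,
      (by rw [hspan]; trivial), (by rw [hspan]; trivial), ?_, ?_, ?_, ?_⟩
    · intro h
      apply hno (-1/(2*t))
      funext k
      have hk := congrFun h k
      simp only [Pi.zero_apply] at hk
      show w k = (-1/(2*t)) * u k
      field_simp
      linarith
    · intro h
      apply hno (1/(2*t))
      funext k
      have hk := congrFun h k
      simp only [Pi.zero_apply] at hk
      show w k = (1/(2*t)) * u k
      field_simp
      linarith
    · funext k
      simp only [Pi.add_apply]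
      ring
    · rintro ⟨r, hr, hru⟩
      apply hno ((r - 1/2)/t)
      funext k
      have hk := congrFun hru k
      simp only [Pi.smul_apply, smul_eq_mul] at hk
      show w k = ((r - 1/2)/t) * u k
      field_simp
      nlinarith [hk]
    · rintro ⟨r, hr, hru⟩
      apply hno ((1/2 - r)/t)
      funext k
      have hk := congrFun hru k
      simp only [Pi.smul_apply, smul_eq_mul] at hk
      show w k = ((1/2 - r)/t) * u k
      field_simp
      nlinarith [hk]
    · rintro x ⟨e, he, rfl⟩
      induction e using Sym2.ind with
      | _ i j =>
        have ha : G.Adj i j := he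
        have hne2 : i ≠ j := ha.ne
        rw [dot_edgeVec _ hne2, dot_edgeVec _ hne2]
        by_cases hs : u i + u j = 0
        · have hd : w i + w j = 0 := hw i j ha hs
          have h' : t * w i + t * w j = 0 := by rw [← mul_add, hd, mul_zero]
          have e1 : u i / 2 + t * w i + (u j / 2 + t * w j) = 0 := by linarith
          have e2 : u i / 2 - t * w i + (u j / 2 - t * w j) = 0 := by linarith
          rw [e1, e2]; simp
        · have h1 := htle i j ha hs
          have h2 : (t * |w i + w j|)^2 ≤ (|u i + u j| / 2)^2 := by
            apply sq_le_sq' _ h1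
            have : (0:ℝ) ≤ t * |w i + w j| := by positivity
            linarith
          have h3 : t^2 * (w i + w j)^2 ≤ (u i + u j)^2 / 4 := by
            have e1 : (t * |w i + w j|)^2 = t^2 * (w i + w j)^2 := by
              rw [mul_pow, sq_abs]
            have e2 : (|u i + u j| / 2)^2 = (u i + u j)^2 / 4 := by
              rw [div_pow, sq_abs]; norm_num
            rw [e1, e2] at h2
            exact h2
          nlinarith [h3]
  · rintro ⟨hu0, hcrit⟩
    refine ⟨hu0, by rw [hspan]; trivial, ?_⟩
    rintro ⟨u', u'', hu'0, hu''0, -, -, hsum, hp', hp'', hsign⟩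
    have hsol : SolP G u u' := by
      intro i j ha hs
      have hne2 : i ≠ j := ha.ne
      have h1 := hsign (edgeVec s(i,j)) ⟨s(i,j), ha, rfl⟩
      rw [dot_edgeVec _ hne2, dot_edgeVec _ hne2] at h1
      have h2 : (u' i + u' j) + (u'' i + u'' j) = 0 := by
        have hi := congrFun hsum i
        have hj := congrFun hsum j
        simp only [Pi.add_apply] at hi hj
        linarith
      nlinarith [h1, h2, sq_nonneg (u' i + u' j)]
    obtain ⟨c, hc⟩ := hcrit u' hsol
    have hc0 : c ≠ 0 := by
      rintro rfl
      rw [zero_smul] at hc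
      exact hu'0 hc
    have hcneg : c < 0 := by
      rcases lt_or_gt_of_ne hc0 with h | h
      · exact h
      · exact absurd ⟨c, h, hc⟩ hp'
    apply hp''
    refine ⟨1 - c, by linarith, ?_⟩
    funext k
    have h1 := congrFun hsum k
    have h2 := congrFun hc k
    simp only [Pi.add_apply, Pi.smul_apply, smul_eq_mul] at h1 h2 ⊢
    have : u'' k = u k - u' k := by linarith
    rw [this, h2]; ring

/-- The backward combinatorial direction: the conditions imply the criterion. -/
lemma crit_of_conds (G : SimpleGraph (Fin n)) (I J : Finset (Fin n))
    (hd : Disjoint I J) (hcross : (crossSubgraph G I J).Connected)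
    (hcomp : ∀ c : (G.induce (((I : Set (Fin n)) ∪ (J : Set (Fin n)))ᶜ)).ConnectedComponent,
        ¬ IsBipartiteG ((G.induce (((I : Set (Fin n)) ∪ (J : Set (Fin n)))ᶜ)).induce c.supp)) :
    Crit G (fun k => (if k ∈ I then (1:ℝ) else 0) - (if k ∈ J then 1 else 0)) := by
  set u0 : Fin n → ℝ := fun k => (if k ∈ I then (1:ℝ) else 0) - (if k ∈ J then 1 else 0)
    with hu0def
  have hI : ∀ i ∈ I, u0 i = 1 := by
    intro i hi
    have hiJ : i ∉ J := Finset.disjoint_left.mp hd hi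
    simp [hu0def, hi, hiJ]
  have hJ : ∀ i ∈ J, u0 i = -1 := by
    intro i hi
    have hiI : i ∉ I := Finset.disjoint_right.mp hd hi
    simp [hu0def, hi, hiI]
  have hK : ∀ i, i ∉ I → i ∉ J → u0 i = 0 := by
    intro i h1 h2; simp [hu0def, h1, h2]
  set S : Set (Fin n) := (I : Set (Fin n)) ∪ (J : Set (Fin n)) with hSdef
  have hSne : ∀ i ∈ S, u0 i ≠ 0 := by
    intro i hi
    rcases hi with hi | hi
    · rw [hI i (Finset.mem_coe.mp hi)]; norm_num
    · rw [hJ i (Finset.mem_coe.mp hi)]; norm_num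
  have hScompl : ∀ i, i ∉ S → u0 i = 0 := by
    intro i hi
    have h1 : i ∉ I := fun h => hi (Or.inl (Finset.mem_coe.mpr h))
    have h2 : i ∉ J := fun h => hi (Or.inr (Finset.mem_coe.mpr h))
    exact hK i h1 h2
  constructor
  · obtain ⟨x0⟩ := hcross.nonempty
    intro h
    exact hSne ↑x0 x0.2 (congrFun h ↑x0)
  · intro w hw
    -- (a) `w` vanishes outside `S`
    have hwK : ∀ k, k ∉ S → w k = 0 := by
      intro k hkS
      by_contra hwk
      have hkc : k ∈ Sᶜ := hkS
      set GK := G.induce Sᶜ with hGK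
      set c := GK.connectedComponentMk ⟨k, hkc⟩ with hc
      have hflip : ∀ a b : ↑(Sᶜ), GK.Adj a b → w ↑a + w ↑b = 0 := by
        intro a b hab
        have hGa : G.Adj ↑a ↑b := hab
        apply hw _ _ hGa
        rw [hScompl ↑a a.2, hScompl ↑b b.2]
        ring
      have hnz : ∀ x : ↑(Sᶜ), GK.connectedComponentMk x = c → w ↑x ≠ 0 := by
        intro x hx
        have hr : GK.Reachable ⟨k, hkc⟩ x :=
          (SimpleGraph.ConnectedComponent.exact (hx.trans hc)).symm
        rcases walk_sign (z := fun y : ↑(Sᶜ) => w ↑y) hflip hr with h | h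
        · rw [h]; exact hwk
        · rw [h]; simpa using hwk
      apply hcomp c
      refine ⟨{x : ↑(c.supp) | 0 < w ↑↑x}, ?_⟩
      intro a b hab
      have hadj : GK.Adj ↑a ↑b := hab
      have hwa : w ↑↑a ≠ 0 := hnz ↑a a.2
      have hwb : w ↑↑b ≠ 0 := hnz ↑b b.2
      have hfab := hflip ↑a ↑b hadj
      simp only [Set.mem_setOf_eq]
      constructor
      · intro h1 h2
        linarith
      · intro h2
        push_neg at h2
        rcases lt_or_eq_of_le h2 with h3 | h3
        · linarith
        · exact absurd h3 hwb
    -- (b) the sign pattern on `S` via cross-connectivity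
    obtain ⟨x0⟩ := hcross.nonempty
    set a0 : ℝ := if (↑x0 : Fin n) ∈ I then w ↑x0 else -(w ↑x0) with ha0
    have hbase : ((↑x0:Fin n) ∈ I → w ↑x0 = a0) ∧ ((↑x0:Fin n) ∈ J → w ↑x0 = -a0) := by
      by_cases h : (↑x0:Fin n) ∈ I
      · constructor
        · intro _; rw [ha0, if_pos h]
        · intro h2; exact absurd h (Finset.disjoint_right.mp hd h2)
      · constructor
        · intro h1; exact absurd h1 h
        · intro _; rw [ha0, if_neg h]; ring
    have hprop : ∀ y : ↑S, ((↑y:Fin n) ∈ I → w ↑y = a0) ∧ ((↑y:Fin n) ∈ J → w ↑y = -a0) := by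
      intro y
      refine walk_prop (G' := crossSubgraph G I J)
        (fun x => ((↑x:Fin n) ∈ I → w ↑x = a0) ∧ ((↑x:Fin n) ∈ J → w ↑x = -a0)) ?_
        (hcross.preconnected x0 y) hbase
      intro x y' hxy hx
      have hadj : (SimpleGraph.fromRel fun a b => G.Adj a b ∧ a ∈ I ∧ b ∈ J).Adj ↑x ↑y' := hxy
      rw [SimpleGraph.fromRel_adj] at hadj
      obtain ⟨hne, hcase⟩ := hadj
      rcases hcase with ⟨hGxy, hxI, hyJ⟩ | ⟨hGyx, hyI, hxJ⟩
      · have hflip : w ↑x + w ↑y' = 0 := by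
          apply hw _ _ hGxy
          rw [hI _ hxI, hJ _ hyJ]; ring
        have hwx : w ↑x = a0 := hx.1 hxI
        constructor
        · intro h1; exact absurd hyJ (Finset.disjoint_left.mp hd h1)
        · intro _; linarith
      · have hflip : w ↑y' + w ↑x = 0 := by
          apply hw _ _ hGyx
          rw [hI _ hyI, hJ _ hxJ]; ring
        have hwx : w ↑x = -a0 := hx.2 hxJ
        constructor
        · intro _; linarith
        · intro h1; exact absurd hyI (Finset.disjoint_right.mp hd h1)
    refine ⟨a0, ?_⟩
    funext k
    show w k = (a0 • u0) k
    simp only [Pi.smul_apply, smul_eq_mul]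
    by_cases hkI : k ∈ I
    · have hk : k ∈ S := Or.inl (Finset.mem_coe.mpr hkI)
      have h1 : w k = a0 := (hprop ⟨k, hk⟩).1 hkI
      rw [h1, hI k hkI]; ring
    · by_cases hkJ : k ∈ J
      · have hk : k ∈ S := Or.inr (Finset.mem_coe.mpr hkJ)
        have h1 : w k = -a0 := (hprop ⟨k, hk⟩).2 hkJ
        rw [h1, hJ k hkJ]; ring
      · have hk : k ∉ S := by
          rintro (h | h)
          exacts [hkI (Finset.mem_coe.mp h), hkJ (Finset.mem_coe.mp h)]
        rw [hwK k hk, hK k hkI hkJ]; ring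

/-- The forward combinatorial direction: the criterion implies the conditions. -/
lemma conds_of_crit (G : SimpleGraph (Fin n)) {u : Fin n → ℝ} (hcr : Crit G u) :
    ∃ I J : Finset (Fin n), Disjoint I J ∧
      (crossSubgraph G I J).Connected ∧
      (∀ c : (G.induce (((I : Set (Fin n)) ∪ (J : Set (Fin n)))ᶜ)).ConnectedComponent,
        ¬ IsBipartiteG ((G.induce (((I : Set (Fin n)) ∪ (J : Set (Fin n)))ᶜ)).induce c.supp)) ∧
      PosEq (fun k => (if k ∈ I then (1 : ℝ) else 0) - (if k ∈ J then 1 else 0)) u := by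
  obtain ⟨hu0, hcrit⟩ := hcr
  obtain ⟨v0, hv0⟩ : ∃ v0, u v0 ≠ 0 := by
    by_contra h; push_neg at h; exact hu0 (funext h)
  have hzero_out : ∀ i, ¬ (zg G u).Reachable v0 i → u i = 0 := by
    intro i hi
    set w : Fin n → ℝ := fun m => if (zg G u).Reachable v0 m then u m else 0 with hwdef
    have hwsol : SolP G u w := by
      intro a b hab hsum
      have hZ : (zg G u).Adj a b := ⟨hab, hsum⟩
      have hrab : (zg G u).Reachable v0 a ↔ (zg G u).Reachable v0 b :=
        ⟨fun h => h.trans hZ.reachable, fun h => h.trans hZ.symm.reachable⟩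
      by_cases h : (zg G u).Reachable v0 a
      · simp only [hwdef, if_pos h, if_pos (hrab.mp h)]
        exact hsum
      · simp only [hwdef, if_neg h, if_neg (fun h' => h (hrab.mpr h'))]
        ring
    obtain ⟨lc, hlc⟩ := hcrit w hwsol
    have h2 := congrFun hlc v0
    simp only [Pi.smul_apply, smul_eq_mul, hwdef,
      if_pos (SimpleGraph.Reachable.refl (G := zg G u) v0)] at h2
    have hlc1 : lc = 1 := by
      have h4 : (lc - 1) * u v0 = 0 := by linear_combination -h2
      rcases mul_eq_zero.mp h4 with h5 | h5
      · linarith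
      · exact absurd h5 hv0
    have h3 := congrFun hlc i
    simp only [Pi.smul_apply, smul_eq_mul, hwdef, if_neg hi, hlc1, one_mul] at h3
    exact h3.symm
  have hsign : ∀ i, (zg G u).Reachable v0 i → u i = u v0 ∨ u i = -u v0 := by
    intro i h
    exact walk_sign (G' := zg G u) (fun a b hab => hab.2) h
  set I : Finset (Fin n) := Finset.univ.filter (fun i => 0 < u i) with hIdef
  set J : Finset (Fin n) := Finset.univ.filter (fun i => u i < 0) with hJdef
  have hmemI : ∀ i, i ∈ I ↔ 0 < u i := by intro i; simp [hIdef]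
  have hmemJ : ∀ i, i ∈ J ↔ u i < 0 := by intro i; simp [hJdef]
  have hSmem : ∀ i, i ∈ ((I : Set (Fin n)) ∪ (J : Set (Fin n))) ↔ u i ≠ 0 := by
    intro i
    constructor
    · rintro (h | h)
      · exact ne_of_gt ((hmemI i).mp (Finset.mem_coe.mp h))
      · exact ne_of_lt ((hmemJ i).mp (Finset.mem_coe.mp h))
    · intro h
      rcases lt_or_gt_of_ne h with h1 | h1
      · exact Or.inr (Finset.mem_coe.mpr ((hmemJ i).mpr h1))
      · exact Or.inl (Finset.mem_coe.mpr ((hmemI i).mpr h1))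
  have hreach : ∀ i, i ∈ ((I : Set (Fin n)) ∪ (J : Set (Fin n))) →
      (zg G u).Reachable v0 i := by
    intro i hi
    by_contra h
    exact (hSmem i).mp hi (hzero_out i h)
  have hvalK : ∀ i, i ∉ ((I : Set (Fin n)) ∪ (J : Set (Fin n))) → u i = 0 := by
    intro i hi
    by_contra h
    exact hi ((hSmem i).mpr h)
  set cpos : ℝ := if 0 < u v0 then u v0 else -u v0 with hcposdef
  have hcpos : 0 < cpos := by
    rw [hcposdef]; split_ifs with h
    · exact h
    · push_neg at h
      rcases lt_or_eq_of_le h with h1 | h1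
      · linarith
      · exact absurd h1 hv0
  have hvalI : ∀ i, i ∈ I → u i = cpos := by
    intro i hi
    have h0i : 0 < u i := (hmemI i).mp hi
    have hr := hreach i (Or.inl (Finset.mem_coe.mpr hi))
    rcases hsign i hr with h | h <;> rw [hcposdef] <;> split_ifs with h' <;> linarith
  have hvalJ : ∀ i, i ∈ J → u i = -cpos := by
    intro i hi
    have h0i : u i < 0 := (hmemJ i).mp hi
    have hr := hreach i (Or.inr (Finset.mem_coe.mpr hi))
    rcases hsign i hr with h | h <;> rw [hcposdef] <;> split_ifs with h' <;> linarith
  have hv0S : v0 ∈ ((I : Set (Fin n)) ∪ (J : Set (Fin n))) := (hSmem v0).mpr hv0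
  refine ⟨I, J, ?_, ?_, ?_, ?_⟩
  · rw [Finset.disjoint_left]
    intro a ha hb
    have h1 := (hmemI a).mp ha
    have h2 := (hmemJ a).mp hb
    linarith
  · -- cross connectivity
    have htrans : ∀ (a : Fin n) (ha : a ∈ ((I : Set (Fin n)) ∪ (J : Set (Fin n))))
        (b : Fin n), (zg G u).Reachable a b →
        ∃ hb : b ∈ ((I : Set (Fin n)) ∪ (J : Set (Fin n))),
          (crossSubgraph G I J).Reachable ⟨a, ha⟩ ⟨b, hb⟩ := by
      intro a ha b hr
      refine walk_prop (G' := zg G u)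
        (fun x => ∃ hx : x ∈ ((I : Set (Fin n)) ∪ (J : Set (Fin n))),
          (crossSubgraph G I J).Reachable ⟨a, ha⟩ ⟨x, hx⟩) ?_ hr
        ⟨ha, SimpleGraph.Reachable.refl _⟩
      rintro x y hxy ⟨hxS, hxr⟩
      have hux : u x ≠ 0 := (hSmem x).mp hxS
      have hsum := hxy.2
      have huy : u y ≠ 0 := fun h0 => hux (by rw [h0] at hsum; linarith)
      have hyS : y ∈ ((I : Set (Fin n)) ∪ (J : Set (Fin n))) := (hSmem y).mpr huy
      refine ⟨hyS, hxr.trans (SimpleGraph.Adj.reachable ?_)⟩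
      show (SimpleGraph.fromRel fun p q => G.Adj p q ∧ p ∈ I ∧ q ∈ J).Adj x y
      rw [SimpleGraph.fromRel_adj]
      refine ⟨fun he => huy (by rw [he] at hsum; linarith), ?_⟩
      rcases lt_or_gt_of_ne hux with hneg | hpos
      · exact Or.inr ⟨hxy.1.symm, (hmemI y).mpr (by linarith), (hmemJ x).mpr hneg⟩
      · exact Or.inl ⟨hxy.1, (hmemI x).mpr hpos, (hmemJ y).mpr (by linarith)⟩
    rw [SimpleGraph.connected_iff]
    refine ⟨?_, ⟨⟨v0, hv0S⟩⟩⟩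
    intro x y
    have hrx : (zg G u).Reachable v0 ↑x := hreach ↑x x.2
    have hry : (zg G u).Reachable v0 ↑y := hreach ↑y y.2
    obtain ⟨hbx, hr1⟩ := htrans v0 hv0S ↑x hrx
    obtain ⟨hby, hr2⟩ := htrans v0 hv0S ↑y hry
    exact hr1.symm.trans hr2
  · -- components of the complement are not bipartite
    intro c hbip
    obtain ⟨T, hT⟩ := hbip
    obtain ⟨vr, hvr⟩ := c.exists_rep
    set w : Fin n → ℝ := fun m =>
      if hm : m ∈ (((I : Set (Fin n)) ∪ (J : Set (Fin n)))ᶜ) then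
        (if hc2 : (G.induce (((I : Set (Fin n)) ∪ (J : Set (Fin n)))ᶜ)).connectedComponentMk
            ⟨m, hm⟩ = c then
          (if (⟨⟨m, hm⟩, hc2⟩ : ↑(c.supp)) ∈ T then (1:ℝ) else -1) else 0)
      else 0 with hwdef
    have hwsol : SolP G u w := by
      intro a b hab hsum
      by_cases haC : a ∈ (((I : Set (Fin n)) ∪ (J : Set (Fin n)))ᶜ)
      · by_cases hbC : b ∈ (((I : Set (Fin n)) ∪ (J : Set (Fin n)))ᶜ)
        · have hadj : (G.induce (((I : Set (Fin n)) ∪ (J : Set (Fin n)))ᶜ)).Adj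
              ⟨a, haC⟩ ⟨b, hbC⟩ := hab
          have hcc := SimpleGraph.ConnectedComponent.connectedComponentMk_eq_of_adj hadj
          simp only [hwdef, dif_pos haC, dif_pos hbC]
          by_cases hc2 : (G.induce (((I : Set (Fin n)) ∪ (J : Set (Fin n)))ᶜ)).connectedComponentMk ⟨a, haC⟩ = c
          · have hc2b : (G.induce (((I : Set (Fin n)) ∪ (J : Set (Fin n)))ᶜ)).connectedComponentMk ⟨b, hbC⟩ = c := hcc.symm.trans hc2
            simp only [dif_pos hc2, dif_pos hc2b]
            have hTT := hT ⟨⟨a, haC⟩, hc2⟩ ⟨⟨b, hbC⟩, hc2b⟩ hadj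
            by_cases hA : (⟨⟨a, haC⟩, hc2⟩ : ↑(c.supp)) ∈ T
            · rw [if_pos hA, if_neg (hTT.mp hA)]; ring
            · have hB : (⟨⟨b, hbC⟩, hc2b⟩ : ↑(c.supp)) ∈ T :=
                not_not.mp (fun hB => hA (hTT.mpr hB))
              rw [if_neg hA, if_pos hB]; ring
          · have hc2b : ¬ (G.induce (((I : Set (Fin n)) ∪ (J : Set (Fin n)))ᶜ)).connectedComponentMk ⟨b, hbC⟩ = c := fun h => hc2 (hcc.trans h)
            simp only [dif_neg hc2, dif_neg hc2b]; ring
        · exfalso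
          have h1 : u a = 0 := hvalK a haC
          have h2 : u b ≠ 0 := (hSmem b).mp (not_not.mp hbC)
          exact h2 (by linarith)
      · by_cases hbC : b ∈ (((I : Set (Fin n)) ∪ (J : Set (Fin n)))ᶜ)
        · exfalso
          have h1 : u b = 0 := hvalK b hbC
          have h2 : u a ≠ 0 := (hSmem a).mp (not_not.mp haC)
          exact h2 (by linarith)
        · simp only [hwdef, dif_neg haC, dif_neg hbC]; ring
    obtain ⟨lc, hlc⟩ := hcrit w hwsol
    have hvr2 : (↑vr : Fin n) ∈ (((I : Set (Fin n)) ∪ (J : Set (Fin n)))ᶜ) := vr.2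
    have hvr3 : (G.induce (((I : Set (Fin n)) ∪ (J : Set (Fin n)))ᶜ)).connectedComponentMk
        ⟨↑vr, hvr2⟩ = c := hvr
    have h1 := congrFun hlc ↑vr
    have hu0vr : u ↑vr = 0 := hvalK ↑vr hvr2
    simp only [Pi.smul_apply, smul_eq_mul, hu0vr, mul_zero, hwdef,
      dif_pos hvr2, dif_pos hvr3] at h1
    split_ifs at h1 <;> norm_num at h1
  · refine ⟨cpos, hcpos, ?_⟩
    funext k
    simp only [Pi.smul_apply, smul_eq_mul]
    by_cases hkI : k ∈ I
    · have h2 : k ∉ J := by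
        intro h
        have h3 := (hmemI k).mp hkI
        have h4 := (hmemJ k).mp h
        linarith
      rw [hvalI k hkI, if_pos hkI, if_neg h2]; ring
    · by_cases hkJ : k ∈ J
      · rw [hvalJ k hkJ, if_neg hkI, if_pos hkJ]; ring
      · have hk : k ∉ ((I : Set (Fin n)) ∪ (J : Set (Fin n))) := by
          rintro (h | h)
          exacts [hkI (Finset.mem_coe.mp h), hkJ (Finset.mem_coe.mp h)]
        rw [hvalK k hk, if_neg hkI, if_neg hkJ]; ring

end Aux

/-- **Lemma 4.1(II)**: for a connected non-bipartite graph `G`, the `G`-indecomposable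
points are exactly the points `[∑_{i∈I} f_i - ∑_{j∈J} f_j]` for disjoint `I, J` such
that the subgraph with vertex set `I ∪ J` and edges between `I` and `J` is connected
and no connected component of `G - (I ∪ J)` is bipartite. -/
theorem nonbipartite_G_indecomposable {n : ℕ} (G : SimpleGraph (Fin n))
    (hconn : G.Connected) (hnb : ¬ IsBipartiteG G) :
    ∀ u : Fin n → ℝ,
      Indecomp (edgeVecs G) u ↔
        ∃ I J : Finset (Fin n), Disjoint I J ∧
          (crossSubgraph G I J).Connected ∧
          (∀ c : (G.induce (((I : Set (Fin n)) ∪ (J : Set (Fin n)))ᶜ)).ConnectedComponent,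
            ¬ IsBipartiteG
              ((G.induce (((I : Set (Fin n)) ∪ (J : Set (Fin n)))ᶜ)).induce c.supp)) ∧
          PosEq (fun k => (if k ∈ I then (1 : ℝ) else 0) - (if k ∈ J then 1 else 0)) u := by
  intro u
  rw [indecomp_iff_crit G hconn hnb]
  constructor
  · intro h
    exact conds_of_crit G h
  · rintro ⟨I, J, hd, hcross, hcomp, r, hr, hru⟩
    rw [hru]
    exact crit_smul hr (crit_of_conds G I J hd hcross hcomp)
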